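/- For every ε > 0 there exists a constant C = C(ε) > 0 such that for all integers q > N ≥ 1 with q ≥ 2 and all nonnegative integers i, j with i ≤ j ≤ ⌊2 log q⌋, the number T_{i,j}(q,N) of quadruples (m,n,u,v) of positive integers with 1 ≤ m,n ≤ N, e^i ≤ u < e^{i+1}, e^j ≤ v < e^{j+1}, mu ≡ nv (mod q) and mu ≠ nv satisfies T_{i,j}(q,N) ≤ C·e^{i+j}·N²·q^{−1+ε}. -/

import Mathlib

open scoped BigOperators
open Finset Real

lemma divisor_bound (ε : ℝ) (hε : 0 < ε) :
    ∃ C : ℝ, 1 ≤ C ∧ ∀ n : ℕ, n ≠ 0 → (n.divisors.card : ℝ) ≤ C * (n : ℝ) ^ ε := by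
  set c : ℝ := ε * Real.log 2 with hc
  have hc0 : 0 < c := mul_pos hε (Real.log_pos one_lt_two)
  set C₀ : ℝ := 1 + 1 / c with hC₀
  have hC₀1 : 1 ≤ C₀ := le_add_of_nonneg_right (by positivity)
  set B : ℕ := ⌈(2 : ℝ) ^ (1 / ε)⌉₊ with hB
  refine ⟨C₀ ^ (B + 1), one_le_pow₀ hC₀1, ?_⟩
  intro n hn
  set S : Finset ℕ := n.primeFactors with hS
  set w : ℕ → ℝ := fun p => if (p : ℝ) ^ ε < 2 then C₀ else 1 with hw
  -- key pointwise bound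
  have key : ∀ p ∈ S,
      ((n.factorization p + 1 : ℕ) : ℝ) ≤ w p * (p : ℝ) ^ ((n.factorization p : ℝ) * ε) := by
    intro p hp
    have hp2 : 2 ≤ p := (Nat.prime_of_mem_primeFactors hp).two_le
    have hp0 : (0 : ℝ) < p := by positivity
    set a : ℕ := n.factorization p with ha
    have h2p : (2 : ℝ) ^ ((a : ℝ) * ε) ≤ (p : ℝ) ^ ((a : ℝ) * ε) :=
      Real.rpow_le_rpow (by norm_num) (by exact_mod_cast hp2) (by positivity)
    by_cases hsmall : (p : ℝ) ^ ε < 2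
    · simp only [hw, if_pos hsmall]
      have h1 : ((a + 1 : ℕ) : ℝ) ≤ C₀ * Real.exp ((a : ℝ) * c) := by
        have he : (a : ℝ) * c ≤ Real.exp ((a : ℝ) * c) := by
          linarith [Real.add_one_le_exp ((a : ℝ) * c)]
        have he1 : (1 : ℝ) ≤ Real.exp ((a : ℝ) * c) := Real.one_le_exp (by positivity)
        have haa : (a : ℝ) ≤ Real.exp ((a : ℝ) * c) / c := by
          rw [le_div_iff₀ hc0]; nlinarith
        push_cast
        have hEq : C₀ * Real.exp ((a : ℝ) * c)
            = Real.exp ((a : ℝ) * c) / c + Real.exp ((a : ℝ) * c) := by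
          field_simp [hC₀]; rw [hC₀, add_mul, one_div, inv_mul_cancel₀ hc0.ne']; ring
        rw [hEq]; linarith
      have h2 : Real.exp ((a : ℝ) * c) = (2 : ℝ) ^ ((a : ℝ) * ε) := by
        rw [Real.rpow_def_of_pos two_pos]; rw [hc]; ring_nf
      calc ((a + 1 : ℕ) : ℝ) ≤ C₀ * Real.exp ((a : ℝ) * c) := h1
        _ = C₀ * (2 : ℝ) ^ ((a : ℝ) * ε) := by rw [h2]
        _ ≤ C₀ * (p : ℝ) ^ ((a : ℝ) * ε) :=
            mul_le_mul_of_nonneg_left h2p (by linarith)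
    · simp only [hw, if_neg hsmall]
      push_neg at hsmall
      rw [one_mul]
      have h1 : ((a + 1 : ℕ) : ℝ) ≤ (2 : ℝ) ^ (a : ℕ) := by
        exact_mod_cast Nat.lt_two_pow_self (n := a)
      have h3 : (2 : ℝ) ^ (a : ℕ) ≤ ((p : ℝ) ^ ε) ^ (a : ℕ) :=
        pow_le_pow_left₀ (by norm_num) hsmall a
      have h4 : ((p : ℝ) ^ ε) ^ (a : ℕ) = (p : ℝ) ^ ((a : ℝ) * ε) := by
        rw [mul_comm, Real.rpow_mul hp0.le, Real.rpow_natCast]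
      linarith
  -- product identities
  have hd : (n.divisors.card : ℝ) = ∏ p ∈ S, ((n.factorization p + 1 : ℕ) : ℝ) := by
    rw [Nat.card_divisors hn]; push_cast; rfl
  have hn' : (n : ℝ) ^ ε = ∏ p ∈ S, (p : ℝ) ^ ((n.factorization p : ℝ) * ε) := by
    have h0 : (n : ℝ) = ∏ p ∈ S, (p : ℝ) ^ (n.factorization p : ℕ) := by
      conv_lhs => rw [← Nat.factorization_prod_pow_eq_self hn]
      rw [Finsupp.prod]
      push_cast
      rfl
    rw [h0, ← Real.finset_prod_rpow _ _ (fun p _ => by positivity) ε]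
    refine Finset.prod_congr rfl fun p hp => ?_
    have hp0 : (0 : ℝ) ≤ p := by positivity
    rw [← Real.rpow_natCast (p : ℝ) (n.factorization p), ← Real.rpow_mul hp0]
  -- combine
  have hprod : (n.divisors.card : ℝ)
      ≤ (∏ p ∈ S, w p) * ∏ p ∈ S, (p : ℝ) ^ ((n.factorization p : ℝ) * ε) := by
    rw [hd, ← Finset.prod_mul_distrib]
    refine Finset.prod_le_prod (fun p _ => by positivity) key
  have hwle : (∏ p ∈ S, w p) ≤ C₀ ^ (B + 1) := by
    classical
    rw [← Finset.prod_filter_mul_prod_filter_not S (fun p : ℕ => (p : ℝ) ^ ε < 2)]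
    have h2 : ∏ p ∈ S.filter (fun p : ℕ => ¬ (p : ℝ) ^ ε < 2), w p = 1 := by
      refine Finset.prod_eq_one fun p hp => ?_
      simp only [hw, if_neg (Finset.mem_filter.mp hp).2]
    rw [h2, mul_one]
    have h1 : ∏ p ∈ S.filter (fun p : ℕ => (p : ℝ) ^ ε < 2), w p
        ≤ C₀ ^ (S.filter (fun p : ℕ => (p : ℝ) ^ ε < 2)).card := by
      calc ∏ p ∈ S.filter (fun p : ℕ => (p : ℝ) ^ ε < 2), w p
          ≤ ∏ _p ∈ S.filter (fun p : ℕ => (p : ℝ) ^ ε < 2), C₀ := by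
            refine Finset.prod_le_prod (fun p _ => ?_) (fun p hp => ?_)
            · simp only [hw]; split <;> linarith
            · simp only [hw]; rw [if_pos (Finset.mem_filter.mp hp).2]
        _ = C₀ ^ (S.filter (fun p : ℕ => (p : ℝ) ^ ε < 2)).card := Finset.prod_const C₀
    have hcard : (S.filter (fun p : ℕ => (p : ℝ) ^ ε < 2)).card ≤ B + 1 := by
      have hsub : S.filter (fun p : ℕ => (p : ℝ) ^ ε < 2) ⊆ Finset.range (B + 1) := by
        intro p hp
        obtain ⟨hpS, hps⟩ := Finset.mem_filter.mp hp
        have hp2 : 2 ≤ p := (Nat.prime_of_mem_primeFactors hpS).two_le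
        have hp0 : (0 : ℝ) < p := by positivity
        have hlt : (p : ℝ) < (2 : ℝ) ^ (1 / ε) := by
          have := Real.rpow_lt_rpow (by positivity) hps (by positivity : (0:ℝ) < 1/ε)
          rwa [← Real.rpow_mul hp0.le, mul_one_div, div_self hε.ne', Real.rpow_one] at this
        have hpB : p < B := by
          exact_mod_cast lt_of_lt_of_le hlt (Nat.le_ceil _)
        exact Finset.mem_range.mpr (Nat.lt_succ_of_lt hpB)
      calc _ ≤ (Finset.range (B + 1)).card := Finset.card_le_card hsub
        _ = B + 1 := Finset.card_range _
    calc _ ≤ C₀ ^ (S.filter (fun p : ℕ => (p : ℝ) ^ ε < 2)).card := h1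
      _ ≤ C₀ ^ (B + 1) := pow_le_pow_right₀ hC₀1 hcard
  calc (n.divisors.card : ℝ)
      ≤ (∏ p ∈ S, w p) * ∏ p ∈ S, (p : ℝ) ^ ((n.factorization p : ℝ) * ε) := hprod
    _ ≤ C₀ ^ (B + 1) * (n : ℝ) ^ ε := by
        rw [hn']
        refine mul_le_mul_of_nonneg_right hwle (Finset.prod_nonneg fun p _ => by positivity)

/-- `T_{i,j}(q,N)` is the number of quadruples `(m,n,u,v)` of positive integers with
`1 ≤ m,n ≤ N`, `eⁱ ≤ u < e^{i+1}`, `eʲ ≤ v < e^{j+1}`, `mu ≡ nv (mod q)` and `mu ≠ nv`. -/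
noncomputable def T (q N i j : ℕ) : ℕ :=
  Nat.card {x : ℕ × ℕ × ℕ × ℕ //
    1 ≤ x.1 ∧ x.1 ≤ N ∧ 1 ≤ x.2.1 ∧ x.2.1 ≤ N ∧
    Real.exp i ≤ (x.2.2.1 : ℝ) ∧ (x.2.2.1 : ℝ) < Real.exp (i + 1) ∧
    Real.exp j ≤ (x.2.2.2 : ℝ) ∧ (x.2.2.2 : ℝ) < Real.exp (j + 1) ∧
    x.1 * x.2.2.1 ≡ x.2.1 * x.2.2.2 [MOD q] ∧ x.1 * x.2.2.1 ≠ x.2.1 * x.2.2.2}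

/-- For every `ε > 0` there is `C = C(ε) > 0` such that for all integers `q > N ≥ 1`
with `q ≥ 2` and all nonnegative integers `i ≤ j ≤ ⌊2 log q⌋`, one has
`T_{i,j}(q,N) ≤ C e^{i+j} N² q^{-1+ε}`. -/
theorem T_bound :
    ∀ ε : ℝ, 0 < ε → ∃ C : ℝ, 0 < C ∧ ∀ q N i j : ℕ, 2 ≤ q → 1 ≤ N → N < q →
      i ≤ j → (j : ℤ) ≤ ⌊2 * Real.log q⌋ →
      (T q N i j : ℝ) ≤ C * Real.exp ((i : ℝ) + (j : ℝ)) * (N : ℝ) ^ 2 *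
        (q : ℝ) ^ (-1 + ε) := by
  intro ε hε
  obtain ⟨C₀, hC₀1, hdiv⟩ := divisor_bound (ε / 5) (by positivity)
  have hC₀0 : 0 < C₀ := lt_of_lt_of_le one_pos hC₀1
  refine ⟨2 * Real.exp 2 * C₀, by positivity, ?_⟩
  intro q N i j hq hN hNq hij hjlog
  classical
  have hq0 : (0 : ℝ) < q := by positivity
  have hN0 : (0 : ℝ) < N := by exact_mod_cast hN
  set U : ℕ := ⌊Real.exp ((i : ℝ) + 1)⌋₊ with hU
  set V : ℕ := ⌊Real.exp ((j : ℝ) + 1)⌋₊ with hV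
  set K : ℕ := ⌊(N : ℝ) * Real.exp ((j : ℝ) + 1) / q⌋₊ with hK
  set D : ℕ := ⌊C₀ * (q : ℝ) ^ ε⌋₊ with hD
  set P : ℕ × ℕ × ℕ × ℕ → Prop := fun x =>
    1 ≤ x.1 ∧ x.1 ≤ N ∧ 1 ≤ x.2.1 ∧ x.2.1 ≤ N ∧
    Real.exp i ≤ (x.2.2.1 : ℝ) ∧ (x.2.2.1 : ℝ) < Real.exp (i + 1) ∧
    Real.exp j ≤ (x.2.2.2 : ℝ) ∧ (x.2.2.2 : ℝ) < Real.exp (j + 1) ∧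
    x.1 * x.2.2.1 ≡ x.2.1 * x.2.2.2 [MOD q] ∧ x.1 * x.2.2.1 ≠ x.2.1 * x.2.2.2 with hPdef
  set s : Finset (ℕ × ℕ × ℕ × ℕ) :=
    ((Finset.Icc 1 N) ×ˢ (Finset.Icc 1 N) ×ˢ (Finset.Icc 1 U) ×ˢ (Finset.Icc 1 V)).filter P
    with hs
  -- Step A : T = s.card
  have hTs : T q N i j = s.card := by
    have h1 : T q N i j = Set.ncard {x : ℕ × ℕ × ℕ × ℕ | P x} := by
      rw [T, ← Nat.card_coe_set_eq]
      rfl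
    have h2 : {x : ℕ × ℕ × ℕ × ℕ | P x} = ↑s := by
      ext x
      obtain ⟨m, n, u, v⟩ := x
      simp only [hs, Finset.coe_filter, Set.mem_setOf_eq, Finset.mem_product, Finset.mem_Icc]
      constructor
      · intro hx
        obtain ⟨h1, h2, h3, h4, h5, h6, h7, h8, h9, h10⟩ := hx
        have hu1 : 1 ≤ u := by
          have : (1 : ℝ) ≤ (u : ℝ) := le_trans (Real.one_le_exp (by positivity)) h5
          exact_mod_cast this
        have hv1 : 1 ≤ v := by
          have : (1 : ℝ) ≤ (v : ℝ) := le_trans (Real.one_le_exp (by positivity)) h7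
          exact_mod_cast this
        have huU : u ≤ U := Nat.le_floor (le_of_lt h6)
        have hvV : v ≤ V := Nat.le_floor (le_of_lt h8)
        exact ⟨⟨⟨h1, h2⟩, ⟨h3, h4⟩, ⟨hu1, huU⟩, hv1, hvV⟩,
          h1, h2, h3, h4, h5, h6, h7, h8, h9, h10⟩
      · exact fun hx => hx.2
    rw [h1, h2, Set.ncard_coe_finset]
  -- the image map
  set g : ℕ × ℕ × ℕ × ℕ → ℤ := fun x =>
    ((x.1 * x.2.2.1 : ℕ) : ℤ) - ((x.2.1 * x.2.2.2 : ℕ) : ℤ) with hg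
  set f : ℕ × ℕ × ℕ × ℕ → ℕ × ℕ × ℤ := fun x => (x.1, x.2.2.1, g x / (q : ℤ)) with hf
  set t : Finset (ℕ × ℕ × ℤ) :=
    (Finset.Icc 1 N) ×ˢ (Finset.Icc 1 U) ×ˢ ((Finset.Icc (-(K : ℤ)) (K : ℤ)).erase 0)
    with ht
  have hexpij : Real.exp ((i : ℝ) + 1) ≤ Real.exp ((j : ℝ) + 1) := by
    have : (i : ℝ) ≤ (j : ℝ) := by exact_mod_cast hij
    exact Real.exp_le_exp.mpr (by linarith)
  -- basic facts about elements of s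
  have hmem : ∀ x ∈ s, (q : ℤ) * (g x / (q : ℤ)) = g x ∧ g x ≠ 0 := by
    intro x hx
    have hP : P x := (Finset.mem_filter.mp hx).2
    obtain ⟨h1, h2, h3, h4, h5, h6, h7, h8, h9, h10⟩ := hP
    have hdvd : (q : ℤ) ∣ g x := by
      have h := (Nat.modEq_iff_dvd (n := q)).mp h9
      show (q : ℤ) ∣ ((x.1 * x.2.2.1 : ℕ) : ℤ) - ((x.2.1 * x.2.2.2 : ℕ) : ℤ)
      exact dvd_sub_comm.mp h
    constructor
    · exact Int.mul_ediv_cancel' hdvd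
    · intro h0
      apply h10
      have h0' : ((x.1 * x.2.2.1 : ℕ) : ℤ) - ((x.2.1 * x.2.2.2 : ℕ) : ℤ) = 0 := h0
      have h0'' : ((x.1 * x.2.2.1 : ℕ) : ℤ) = ((x.2.1 * x.2.2.2 : ℕ) : ℤ) :=
        sub_eq_zero.mp h0'
      exact_mod_cast h0''
  -- maps to
  have hmaps : ∀ x ∈ s, f x ∈ t := by
    intro x hx
    obtain ⟨hqk, hk0⟩ := hmem x hx
    have hP : P x := (Finset.mem_filter.mp hx).2
    obtain ⟨h1, h2, h3, h4, h5, h6, h7, h8, h9, h10⟩ := hP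
    have hbox := (Finset.mem_filter.mp hx).1
    rw [Finset.mem_product] at hbox
    have hbox2 := hbox.2; rw [Finset.mem_product] at hbox2
    have hbox3 := hbox2.2; rw [Finset.mem_product] at hbox3
    refine Finset.mem_product.mpr ⟨hbox.1, Finset.mem_product.mpr ⟨hbox3.1, ?_⟩⟩
    -- k bounds
    set k : ℤ := g x / (q : ℤ) with hkdef
    have hknez : k ≠ 0 := by
      intro h; apply hk0; rw [← hqk, h, mul_zero]
    have habs : |(g x : ℝ)| ≤ (N : ℝ) * Real.exp ((j : ℝ) + 1) := by
      have hmu : ((x.1 * x.2.2.1 : ℕ) : ℝ) ≤ (N : ℝ) * Real.exp ((j : ℝ) + 1) := by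
        push_cast
        have hx1 : (x.1 : ℝ) ≤ (N : ℝ) := by exact_mod_cast h2
        have hu : (x.2.2.1 : ℝ) ≤ Real.exp ((j : ℝ) + 1) := le_trans (le_of_lt h6) hexpij
        exact mul_le_mul hx1 hu (by positivity) (by positivity)
      have hnv : ((x.2.1 * x.2.2.2 : ℕ) : ℝ) ≤ (N : ℝ) * Real.exp ((j : ℝ) + 1) := by
        push_cast
        have hx1 : (x.2.1 : ℝ) ≤ (N : ℝ) := by exact_mod_cast h4
        exact mul_le_mul hx1 (le_of_lt h8) (by positivity) (by positivity)
      have hmu0 : (0 : ℝ) ≤ ((x.1 * x.2.2.1 : ℕ) : ℝ) := by positivity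
      have hnv0 : (0 : ℝ) ≤ ((x.2.1 * x.2.2.2 : ℕ) : ℝ) := by positivity
      rw [hg]
      push_cast
      rw [abs_le]
      constructor
      · push_cast at hnv hmu0 ⊢; linarith
      · push_cast at hmu hnv0 ⊢; linarith
    have hkK : k.natAbs ≤ K := by
      apply Nat.le_floor
      rw [le_div_iff₀ hq0]
      have h1' : |(k : ℝ)| * (q : ℝ) = |(g x : ℝ)| := by
        rw [← abs_of_pos hq0, ← abs_mul]
        congr 1
        push_cast [← hqk]
        ring
      calc ((k.natAbs : ℕ) : ℝ) * (q : ℝ) = |(k : ℝ)| * (q : ℝ) := by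
            congr 1
            rw [Nat.cast_natAbs]
            exact Int.cast_abs
        _ = |(g x : ℝ)| := h1'
        _ ≤ (N : ℝ) * Real.exp ((j : ℝ) + 1) := habs
    have hkint : -(K : ℤ) ≤ k ∧ k ≤ (K : ℤ) := by
      rw [← abs_le, Int.abs_eq_natAbs]
      exact_mod_cast hkK
    exact Finset.mem_erase.mpr ⟨hknez, Finset.mem_Icc.mpr hkint⟩
  -- fiber bound
  have hfiber : ∀ b ∈ t, (s.filter fun x => f x = b).card ≤ D := by
    intro b _
    rcases (s.filter fun x => f x = b).eq_empty_or_nonempty with he | ⟨x₀, hx₀⟩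
    · simp [he]
    · have hx₀s : x₀ ∈ s := (Finset.mem_filter.mp hx₀).1
      have hx₀f : f x₀ = b := (Finset.mem_filter.mp hx₀).2
      set M : ℕ := x₀.2.1 * x₀.2.2.2 with hM
      have hsame : ∀ x ∈ s.filter fun x => f x = b, x.2.1 * x.2.2.2 = M := by
        intro x hx
        have hxs : x ∈ s := (Finset.mem_filter.mp hx).1
        have hxf : f x = b := (Finset.mem_filter.mp hx).2
        have heq : (x.1, x.2.2.1, g x / (q : ℤ)) = (x₀.1, x₀.2.2.1, g x₀ / (q : ℤ)) := by
          exact hxf.trans hx₀f.symm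
        rw [Prod.ext_iff, Prod.ext_iff] at heq
        obtain ⟨e1, e2, e3⟩ := heq
        have hg1 := (hmem x hxs).1
        have hg2 := (hmem x₀ hx₀s).1
        have hgg : g x = g x₀ := by
          rw [← hg1, ← hg2]
          exact congrArg (fun z => (q : ℤ) * z) e3
        have hx' : g x = ((x.1 * x.2.2.1 : ℕ) : ℤ) - ((x.2.1 * x.2.2.2 : ℕ) : ℤ) := rfl
        have hx0' : g x₀ = ((x₀.1 * x₀.2.2.1 : ℕ) : ℤ) - ((x₀.2.1 * x₀.2.2.2 : ℕ) : ℤ) := rfl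
        rw [hx', hx0'] at hgg
        have hmu : ((x.1 * x.2.2.1 : ℕ) : ℤ) = ((x₀.1 * x₀.2.2.1 : ℕ) : ℤ) := by
          simp only [e1, e2] at *
          push_cast
          rw [e1, e2]
        have hnn : ((x.2.1 * x.2.2.2 : ℕ) : ℤ) = ((x₀.2.1 * x₀.2.2.2 : ℕ) : ℤ) := by
          omega
        exact_mod_cast hnn
      have hM0 : M ≠ 0 := by
        have hP : P x₀ := (Finset.mem_filter.mp hx₀s).2
        obtain ⟨_, _, h3, _, _, _, h7, _, _, _⟩ := hP
        have hv1 : 1 ≤ x₀.2.2.2 := by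
          have : (1 : ℝ) ≤ (x₀.2.2.2 : ℝ) := le_trans (Real.one_le_exp (by positivity)) h7
          exact_mod_cast this
        exact Nat.mul_ne_zero (by omega) (by omega)
      -- card ≤ number of divisors of M
      have hcard1 : (s.filter fun x => f x = b).card ≤ M.divisors.card := by
        apply Finset.card_le_card_of_injOn (fun x => x.2.1)
        · intro x hx
          have hnv := hsame x hx
          have hP : P x := (Finset.mem_filter.mp (Finset.mem_filter.mp hx).1).2
          exact Nat.mem_divisors.mpr ⟨⟨x.2.2.2, hnv.symm⟩, hM0⟩
        · intro x hx y hy hxy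
          have hx' : x ∈ s.filter fun z => f z = b := Finset.mem_coe.mp hx
          have hy' : y ∈ s.filter fun z => f z = b := Finset.mem_coe.mp hy
          have hxy' : x.2.1 = y.2.1 := hxy
          have hfx : f x = b := (Finset.mem_filter.mp hx').2
          have hfy : f y = b := (Finset.mem_filter.mp hy').2
          have heq : (x.1, x.2.2.1, g x / (q : ℤ)) = (y.1, y.2.2.1, g y / (q : ℤ)) :=
            hfx.trans hfy.symm
          rw [Prod.ext_iff, Prod.ext_iff] at heq
          obtain ⟨e1, e2, _⟩ := heq
          have hnx := hsame x hx'
          have hny := hsame y hy'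
          have hn1 : 1 ≤ x.2.1 := by
            have hP : P x := (Finset.mem_filter.mp (Finset.mem_filter.mp hx').1).2
            exact hP.2.2.1
          have e4 : x.2.2.2 = y.2.2.2 := by
            have h5' : x.2.1 * x.2.2.2 = x.2.1 * y.2.2.2 := by
              rw [hnx, ← hny, hxy']
            exact Nat.eq_of_mul_eq_mul_left (by omega) h5'
          exact Prod.ext_iff.mpr ⟨e1, Prod.ext_iff.mpr ⟨hxy', Prod.ext_iff.mpr ⟨e2, e4⟩⟩⟩
      -- divisor bound
      have hMq : (M : ℝ) ≤ (q : ℝ) ^ (5 : ℕ) := by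
        have hP : P x₀ := (Finset.mem_filter.mp hx₀s).2
        obtain ⟨_, _, h3, h4, _, _, _, h8, _, _⟩ := hP
        have hn : (x₀.2.1 : ℝ) ≤ (N : ℝ) := by exact_mod_cast h4
        have hNq' : (N : ℝ) < (q : ℝ) := by exact_mod_cast hNq
        have hjle : (j : ℝ) ≤ 2 * Real.log q := by
          have h1' : ((j : ℤ) : ℝ) ≤ (⌊2 * Real.log q⌋ : ℝ) := by exact_mod_cast hjlog
          have h2' : ((⌊2 * Real.log q⌋ : ℤ) : ℝ) ≤ 2 * Real.log q := Int.floor_le _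
          push_cast at h1'
          linarith
        have hexpj : Real.exp ((j : ℝ) + 1) ≤ Real.exp 1 * (q : ℝ) ^ (2 : ℕ) := by
          have : Real.exp ((j : ℝ) + 1) ≤ Real.exp (2 * Real.log q + 1) :=
            Real.exp_le_exp.mpr (by linarith)
          calc Real.exp ((j : ℝ) + 1) ≤ Real.exp (2 * Real.log q + 1) := this
            _ = Real.exp 1 * (Real.exp (Real.log q)) ^ (2 : ℕ) := by
                rw [← Real.exp_nat_mul, ← Real.exp_add]; ring_nf
            _ = Real.exp 1 * (q : ℝ) ^ (2 : ℕ) := by rw [Real.exp_log hq0]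
        have he4 : Real.exp 1 ≤ (q : ℝ) ^ (2 : ℕ) := by
          have h2q : (2 : ℝ) ≤ (q : ℝ) := by exact_mod_cast hq
          have : Real.exp 1 < 4 := by
            have := Real.exp_one_lt_d9
            linarith
          nlinarith
        have hMle : (M : ℝ) ≤ (N : ℝ) * Real.exp ((j : ℝ) + 1) := by
          rw [hM]
          push_cast
          exact mul_le_mul hn (le_of_lt h8) (by positivity) (by positivity)
        have hq2 : (0 : ℝ) ≤ (q : ℝ) ^ (2 : ℕ) := by positivity
        calc (M : ℝ) ≤ (N : ℝ) * Real.exp ((j : ℝ) + 1) := hMle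
          _ ≤ (q : ℝ) * (Real.exp 1 * (q : ℝ) ^ (2 : ℕ)) := by
              apply mul_le_mul (le_of_lt hNq') hexpj (by positivity) (by positivity)
          _ ≤ (q : ℝ) * ((q : ℝ) ^ (2 : ℕ) * (q : ℝ) ^ (2 : ℕ)) := by
              apply mul_le_mul_of_nonneg_left _ (le_of_lt hq0)
              exact mul_le_mul_of_nonneg_right he4 hq2
          _ = (q : ℝ) ^ (5 : ℕ) := by ring
      have hdM : (M.divisors.card : ℝ) ≤ C₀ * (q : ℝ) ^ ε := by
        calc (M.divisors.card : ℝ) ≤ C₀ * (M : ℝ) ^ (ε / 5) := hdiv M hM0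
          _ ≤ C₀ * (q : ℝ) ^ ε := by
              apply mul_le_mul_of_nonneg_left _ (le_of_lt hC₀0)
              have h1' : (M : ℝ) ^ (ε / 5) ≤ ((q : ℝ) ^ (5 : ℕ)) ^ (ε / 5) :=
                Real.rpow_le_rpow (by positivity) hMq (by positivity)
              calc (M : ℝ) ^ (ε / 5) ≤ ((q : ℝ) ^ (5 : ℕ)) ^ (ε / 5) := h1'
                _ = (q : ℝ) ^ ε := by
                    rw [← Real.rpow_natCast (q : ℝ) 5, ← Real.rpow_mul (le_of_lt hq0)]
                    congr 1
                    push_cast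
                    ring
      have hDM : M.divisors.card ≤ D := by
        apply Nat.le_floor
        exact hdM
      exact le_trans hcard1 hDM
  -- combine
  have hcount : s.card ≤ D * t.card :=
    Finset.card_le_mul_card_image_of_maps_to hmaps D hfiber
  have htcard : t.card = N * (U * (2 * K)) := by
    rw [ht, Finset.card_product, Finset.card_product, Nat.card_Icc, Nat.card_Icc,
      Finset.card_erase_of_mem (Finset.mem_Icc.mpr ⟨by omega, by omega⟩), Int.card_Icc]
    have h2K : ((K : ℤ) + 1 - -(K : ℤ)).toNat = 2 * K + 1 := by omega
    rw [h2K]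
    simp
  -- to the reals
  have hTreal : (T q N i j : ℝ) ≤ (D : ℝ) * ((N : ℝ) * ((U : ℝ) * (2 * (K : ℝ)))) := by
    rw [hTs]
    have h1' : (s.card : ℝ) ≤ (D : ℝ) * (t.card : ℝ) := by exact_mod_cast hcount
    have h2' : (t.card : ℝ) = (N : ℝ) * ((U : ℝ) * (2 * (K : ℝ))) := by
      rw [htcard]; push_cast; ring
    rw [h2'] at h1'
    exact h1'
  have hDle : (D : ℝ) ≤ C₀ * (q : ℝ) ^ ε := Nat.floor_le (by positivity)
  have hUle : (U : ℝ) ≤ Real.exp ((i : ℝ) + 1) := Nat.floor_le (by positivity)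
  have hKle : (K : ℝ) ≤ (N : ℝ) * Real.exp ((j : ℝ) + 1) / q := Nat.floor_le (by positivity)
  have hfinal : (T q N i j : ℝ) ≤
      (C₀ * (q : ℝ) ^ ε) * ((N : ℝ) * (Real.exp ((i : ℝ) + 1) *
        (2 * ((N : ℝ) * Real.exp ((j : ℝ) + 1) / q)))) := by
    refine le_trans hTreal ?_
    gcongr
  calc (T q N i j : ℝ) ≤ (C₀ * (q : ℝ) ^ ε) * ((N : ℝ) * (Real.exp ((i : ℝ) + 1) *
        (2 * ((N : ℝ) * Real.exp ((j : ℝ) + 1) / q)))) := hfinal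
    _ = 2 * Real.exp 2 * C₀ * Real.exp ((i : ℝ) + (j : ℝ)) * (N : ℝ) ^ 2 *
        (q : ℝ) ^ (-1 + ε) := by
        have hE : Real.exp ((i : ℝ) + 1) * Real.exp ((j : ℝ) + 1)
            = Real.exp 2 * Real.exp ((i : ℝ) + (j : ℝ)) := by
          rw [← Real.exp_add, ← Real.exp_add]
          congr 1
          ring
        rw [show (-1 + ε : ℝ) = ε + (-1) by ring, Real.rpow_add hq0, Real.rpow_neg_one]
        rw [show (2 : ℝ) * Real.exp 2 * C₀ * Real.exp ((i : ℝ) + (j : ℝ)) * (N : ℝ) ^ 2 *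
            ((q : ℝ) ^ ε * (q : ℝ)⁻¹)
            = 2 * (Real.exp 2 * Real.exp ((i : ℝ) + (j : ℝ))) * C₀ * (N : ℝ) ^ 2 *
            ((q : ℝ) ^ ε * (q : ℝ)⁻¹) by ring, ← hE]
        field_simp
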